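/- Let θ be a skew-symmetric real d×d matrix and define σ : ℤ^d → (S¹)^d by σ(n)_j = exp(2πi(θn)_j) for 1 ≤ j ≤ d. Then σ has dense range in the torus (S¹)^d if and only if θ is nondegenerate. -/

import Mathlib

open MeasureTheory Complex

noncomputable def chi {d : ℕ} (x : Fin d → ℤ) : C(Fin d → Circle, ℂ) :=
  ⟨fun z => ∏ j, ((z j ^ x j : Circle) : ℂ), by
    apply continuous_finset_prod
    intro j _
    exact continuous_subtype_val.comp ((continuous_apply j).zpow _)⟩

lemma exp_zpow (t : ℝ) (n : ℤ) : (Circle.exp t) ^ n = Circle.exp (n * t) := by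
  have := Circle.expHom.map_zsmul n t
  simpa [zsmul_eq_mul] using this.symm

lemma chi_mul {d : ℕ} (x : Fin d → ℤ) (a b : Fin d → Circle) :
    chi x (a * b) = chi x a * chi x b := by
  simp only [chi, ContinuousMap.coe_mk, Pi.mul_apply, mul_zpow, Circle.coe_mul,
    Finset.prod_mul_distrib]

lemma chi_apply_mul {d : ℕ} (x y : Fin d → ℤ) (z : Fin d → Circle) :
    chi x z * chi y z = chi (x + y) z := by
  simp only [chi, ContinuousMap.coe_mk, Pi.add_apply, zpow_add, ← Finset.prod_mul_distrib,
    ← Circle.coe_mul]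

lemma chi_zero {d : ℕ} : chi (0 : Fin d → ℤ) = 1 := by
  ext z; simp [chi]

lemma chi_star {d : ℕ} (x : Fin d → ℤ) : star (chi x) = chi (-x) := by
  ext z
  simp only [chi, ContinuousMap.star_apply, ContinuousMap.coe_mk, Pi.neg_apply, star_prod]
  refine Finset.prod_congr rfl fun j _ => ?_
  rw [zpow_neg, RCLike.star_def, ← Circle.coe_inv_eq_conj]

lemma chi_sigma {d : ℕ} (x : Fin d → ℤ) (v : Fin d → ℝ) :
    chi x (fun j => Circle.exp (2 * Real.pi * v j)) =
      Circle.exp (2 * Real.pi * (∑ j, (x j : ℝ) * v j)) := by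
  simp only [chi, ContinuousMap.coe_mk, exp_zpow, Circle.coe_exp]
  rw [← Complex.exp_sum]
  congr 1
  push_cast
  rw [Finset.mul_sum, Finset.sum_mul]
  exact Finset.sum_congr rfl fun j _ => by ring

lemma chi_single {d : ℕ} (j : Fin d) (z : Fin d → Circle) :
    chi (Pi.single j 1) z = (z j : ℂ) := by
  simp only [chi, ContinuousMap.coe_mk]
  rw [Finset.prod_eq_single j]
  · simp
  · intro k _ hk
    simp [Pi.single_eq_of_ne hk]
  · simp

lemma chi_ne_one {d : ℕ} {x : Fin d → ℤ} (hx : x ≠ 0) :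
    ∃ z : Fin d → Circle, chi x z ≠ 1 := by
  obtain ⟨j, hj⟩ : ∃ j, x j ≠ 0 := by
    by_contra h
    push_neg at h
    exact hx (funext h)
  refine ⟨Function.update 1 j (Circle.exp (Real.pi / (x j : ℝ))), ?_⟩
  have hxj : ((x j : ℝ)) ≠ 0 := Int.cast_ne_zero.mpr hj
  have : chi x (Function.update 1 j (Circle.exp (Real.pi / (x j : ℝ)))) =
      ((Circle.exp (Real.pi / (x j : ℝ)) ^ (x j) : Circle) : ℂ) := by
    simp only [chi, ContinuousMap.coe_mk]
    rw [Finset.prod_eq_single j]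
    · rw [Function.update_self]
    · intro k _ hk
      simp [Function.update_of_ne hk]
    · simp
  rw [this, exp_zpow, mul_div_cancel₀ _ hxj, Circle.coe_exp]
  rw [Complex.exp_pi_mul_I]
  norm_num

lemma integral_char_eq_zero {K : Type*} [Group K] [TopologicalSpace K] [IsTopologicalGroup K]
    [MeasurableSpace K] [BorelSpace K] (μ : Measure K) [μ.IsMulLeftInvariant]
    (χ : K → ℂ) (hmul : ∀ a b, χ (a * b) = χ a * χ b) (h : K) (hh : χ h ≠ 1) :
    ∫ z, χ z ∂μ = 0 := by
  have h1 : ∫ z, χ (h * z) ∂μ = ∫ z, χ z ∂μ := integral_mul_left_eq_self χ h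
  simp only [hmul, MeasureTheory.integral_const_mul] at h1
  have h2 : (χ h - 1) * ∫ a, χ a ∂μ = 0 := by rw [sub_mul, one_mul, h1, sub_self]
  rcases mul_eq_zero.mp h2 with h3 | h3
  · exact absurd (sub_eq_zero.mp h3) hh
  · exact h3

noncomputable def chiSpan (d : ℕ) : Submodule ℂ C(Fin d → Circle, ℂ) :=
  Submodule.span ℂ (Set.range (chi (d := d)))

lemma chiSpan_mul_mem {d : ℕ} {a b : C(Fin d → Circle, ℂ)} (ha : a ∈ chiSpan d)
    (hb : b ∈ chiSpan d) : a * b ∈ chiSpan d := by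
  induction ha using Submodule.span_induction generalizing b with
  | mem f hf =>
    induction hb using Submodule.span_induction with
    | mem g hg =>
      obtain ⟨x, rfl⟩ := hf
      obtain ⟨y, rfl⟩ := hg
      have : chi x * chi y = chi (x + y) := by
        ext z; exact chi_apply_mul x y z
      rw [this]
      exact Submodule.subset_span ⟨x + y, rfl⟩
    | zero => rw [mul_zero]; exact zero_mem _
    | add g₁ g₂ _ _ h1 h2 => rw [mul_add]; exact add_mem h1 h2
    | smul c g _ h1 => rw [mul_smul_comm]; exact Submodule.smul_mem _ _ h1
  | zero => rw [zero_mul]; exact zero_mem _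
  | add f₁ f₂ _ _ h1 h2 => rw [add_mul]; exact add_mem (h1 hb) (h2 hb)
  | smul c f _ h1 => rw [smul_mul_assoc]; exact Submodule.smul_mem _ _ (h1 hb)

noncomputable def chiAlg (d : ℕ) : StarSubalgebra ℂ C(Fin d → Circle, ℂ) where
  toSubalgebra := (chiSpan d).toSubalgebra
    (by rw [← chi_zero]; exact Submodule.subset_span ⟨0, rfl⟩)
    (fun _ _ ha hb => chiSpan_mul_mem ha hb)
  star_mem' := by
    intro a ha
    have : ∀ f ∈ chiSpan d, star f ∈ chiSpan d := by
      intro f hf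
      induction hf using Submodule.span_induction with
      | mem g hg =>
        obtain ⟨x, rfl⟩ := hg
        rw [chi_star]
        exact Submodule.subset_span ⟨-x, rfl⟩
      | zero => rw [star_zero]; exact zero_mem _
      | add g₁ g₂ _ _ h1 h2 => rw [star_add]; exact add_mem h1 h2
      | smul c g _ h1 => rw [star_smul]; exact Submodule.smul_mem _ _ h1
    exact this a ha

lemma dense_chiSpan (d : ℕ) : Dense (chiSpan d : Set C(Fin d → Circle, ℂ)) := by
  have htop : (chiAlg d).topologicalClosure = ⊤ := by
    apply ContinuousMap.starSubalgebra_topologicalClosure_eq_top_of_separatesPoints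
    intro z w hzw
    obtain ⟨j, hj⟩ : ∃ j, z j ≠ w j := by
      by_contra h
      push_neg at h
      exact hzw (funext h)
    refine ⟨_, ⟨chi (Pi.single j 1), Submodule.subset_span ⟨_, rfl⟩, rfl⟩, ?_⟩
    simp only [chi_single]
    exact fun h => hj (Subtype.coe_injective h)
  have hset : (chiAlg d : Set C(Fin d → Circle, ℂ)) = (chiSpan d : Set C(Fin d → Circle, ℂ)) := rfl
  rw [dense_iff_closure_eq, ← hset]
  have h2 : ((chiAlg d).topologicalClosure : Set C(Fin d → Circle, ℂ)) =
      ((⊤ : StarSubalgebra ℂ C(Fin d → Circle, ℂ)) : Set C(Fin d → Circle, ℂ)) := by rw [htop]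
  rw [StarSubalgebra.topologicalClosure_coe] at h2
  simpa using h2

lemma cmap_integrable {X E : Type*} [TopologicalSpace X] [CompactSpace X] [MeasurableSpace X]
    [OpensMeasurableSpace X] [NormedAddCommGroup E] [NormedSpace ℝ E]
    (μ : Measure X) [IsFiniteMeasure μ] (f : C(X, E)) :
    Integrable (fun x => f x) μ := by
  apply Continuous.integrable_of_hasCompactSupport f.continuous
  exact IsCompact.of_isClosed_subset isCompact_univ (isClosed_tsupport _) (Set.subset_univ _)

lemma continuous_integral_comp {X Y : Type*} [TopologicalSpace X] [CompactSpace X]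
    [MeasurableSpace X] [OpensMeasurableSpace X] [TopologicalSpace Y] [CompactSpace Y]
    (μ : Measure X) [IsProbabilityMeasure μ] (ι : C(X, Y)) :
    Continuous fun f : C(Y, ℂ) => ∫ x, f (ι x) ∂μ := by
  have hlip : LipschitzWith 1 fun f : C(Y, ℂ) => ∫ x, f (ι x) ∂μ := by
    apply LipschitzWith.of_dist_le_mul
    intro f g
    have hint : ∫ x, f (ι x) ∂μ - ∫ x, g (ι x) ∂μ = ∫ x, (f (ι x) - g (ι x)) ∂μ :=
      (integral_sub (cmap_integrable μ (f.comp ι)) (cmap_integrable μ (g.comp ι))).symm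
    have hb : ‖∫ x, (f (ι x) - g (ι x)) ∂μ‖ ≤ dist f g * (μ Set.univ).toReal := by
      apply norm_integral_le_of_norm_le_const
      filter_upwards with x
      calc ‖f (ι x) - g (ι x)‖ = dist (f (ι x)) (g (ι x)) := (dist_eq_norm _ _).symm
        _ ≤ dist f g := ContinuousMap.dist_apply_le_dist _
    rw [NNReal.coe_one, one_mul, dist_eq_norm, hint]
    simpa using hb
  exact hlip.continuous

lemma exp_two_pi_mul_eq_one_iff (r : ℝ) :
    Circle.exp (2 * Real.pi * r) = 1 ↔ ∃ m : ℤ, r = (m : ℝ) := by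
  rw [Circle.exp_eq_one]
  have h2π : (2 * Real.pi) ≠ 0 := by positivity
  constructor
  · rintro ⟨n, hn⟩
    refine ⟨n, ?_⟩
    have : (2 * Real.pi) * r = (2 * Real.pi) * (n : ℝ) := by rw [hn]; ring
    exact mul_left_cancel₀ h2π this
  · rintro ⟨m, rfl⟩
    exact ⟨m, by ring⟩

theorem stmt_4 (d : ℕ) (θ : Matrix (Fin d) (Fin d) ℝ) (hθ : θ.transpose = -θ) :
    DenseRange (fun n : Fin d → ℤ =>
      (fun j => Circle.exp (2 * Real.pi * θ.mulVec (fun i => (n i : ℝ)) j) : Fin d → Circle)) ↔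
    (∀ x : Fin d → ℤ,
      (∀ y : Fin d → ℤ, ∃ m : ℤ,
        dotProduct (fun i => (x i : ℝ)) (θ.mulVec fun i => (y i : ℝ)) = (m : ℝ)) →
      x = 0) := by
  set σ : (Fin d → ℤ) → (Fin d → Circle) := fun n =>
    (fun j => Circle.exp (2 * Real.pi * θ.mulVec (fun i => (n i : ℝ)) j) : Fin d → Circle)
    with hσdef
  have hchiσ : ∀ (x y : Fin d → ℤ), chi x (σ y) =
      Circle.exp (2 * Real.pi *
        dotProduct (fun i => (x i : ℝ)) (θ.mulVec fun i => (y i : ℝ))) := by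
    intro x y
    rw [hσdef]
    rw [chi_sigma x (θ.mulVec fun i => (y i : ℝ))]
    rfl
  have hσmul : ∀ m n, σ (m + n) = σ m * σ n := by
    intro m n
    funext j
    simp only [hσdef, Pi.mul_apply]
    rw [← Circle.exp_add]
    congr 1
    have hcast : (fun i => (((m + n) i : ℤ) : ℝ)) =
        (fun i => ((m i : ℤ) : ℝ)) + fun i => ((n i : ℤ) : ℝ) := by
      funext i; simp [Pi.add_apply]
    rw [hcast, Matrix.mulVec_add]
    simp only [Pi.add_apply]
    ring
  have hσone : σ 0 = 1 := by
    funext j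
    have h0 : (fun i => (((0 : Fin d → ℤ) i : ℤ) : ℝ)) = (0 : Fin d → ℝ) := by funext i; simp
    show Circle.exp (2 * Real.pi * θ.mulVec (fun i => (((0 : Fin d → ℤ) i : ℤ) : ℝ)) j) = 1
    rw [h0, Matrix.mulVec_zero]
    simp
  have hσinv : ∀ n, σ (-n) = (σ n)⁻¹ := by
    intro n
    have h2 : σ (-n) * σ n = 1 := by rw [← hσmul, neg_add_cancel, hσone]
    exact eq_inv_of_mul_eq_one_left h2
  constructor
  · intro hdense x hx
    by_contra hx0
    obtain ⟨z, hz⟩ := chi_ne_one hx0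
    have hsub : Set.range σ ⊆ {g | chi x g = 1} := by
      rintro _ ⟨y, rfl⟩
      show chi x (σ y) = 1
      rw [hchiσ, Circle.coe_eq_one, exp_two_pi_mul_eq_one_iff]
      exact hx y
    have hcl : closure (Set.range σ) ⊆ {g | chi x g = 1} :=
      closure_minimal hsub (isClosed_eq (chi x).continuous continuous_const)
    exact hz (hcl (hdense z))
  · intro hnd
    by_contra hnd2
    simp only [DenseRange, Dense] at hnd2
    push_neg at hnd2
    obtain ⟨w, hw⟩ := hnd2
    borelize (Fin d → Circle)
    let K : Subgroup (Fin d → Circle) :=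
      { carrier := Set.range σ
        mul_mem' := by rintro _ _ ⟨m, rfl⟩ ⟨n, rfl⟩; exact ⟨m + n, hσmul m n⟩
        one_mem' := ⟨0, hσone⟩
        inv_mem' := by rintro _ ⟨n, rfl⟩; exact ⟨-n, hσinv n⟩ }
    let H : Subgroup (Fin d → Circle) := K.topologicalClosure
    have hHcar : (H : Set (Fin d → Circle)) = closure (Set.range σ) := rfl
    have hwH : w ∉ (H : Set (Fin d → Circle)) := by rw [hHcar]; exact hw
    have hHclosed : IsClosed (H : Set (Fin d → Circle)) := K.isClosed_topologicalClosure
    haveI hCompH : CompactSpace ↥H := isCompact_iff_compactSpace.mp hHclosed.isCompact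
    borelize ↥H
    haveI : Nonempty ↥H := ⟨⟨1, H.one_mem⟩⟩
    let μ : Measure ↥H := Measure.haarMeasure ⊤
    haveI hμp : IsProbabilityMeasure μ := ⟨by
      rw [← TopologicalSpace.PositiveCompacts.coe_top (α := ↥H)]
      exact Measure.haarMeasure_self⟩
    let lam : Measure (Fin d → Circle) := Measure.haarMeasure ⊤
    haveI hlamp : IsProbabilityMeasure lam := ⟨by
      rw [← TopologicalSpace.PositiveCompacts.coe_top (α := Fin d → Circle)]
      exact Measure.haarMeasure_self⟩
    let ι : C(↥H, Fin d → Circle) := ⟨Subtype.val, continuous_subtype_val⟩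
    have hA : ∀ x : Fin d → ℤ, (∫ h, chi x (ι h) ∂μ) = ∫ z, chi x z ∂lam := by
      intro x
      by_cases hx : x = 0
      · subst hx
        rw [chi_zero]
        simp
      · have hR : ∫ z, chi x z ∂lam = 0 := by
          obtain ⟨z, hz⟩ := chi_ne_one hx
          exact integral_char_eq_zero lam (chi x) (chi_mul x) z hz
        have hL : ∫ h, chi x (ι h) ∂μ = 0 := by
          have hex : ∃ h : ↥H, chi x (ι h) ≠ 1 := by
            by_contra hall
            push_neg at hall
            apply hx
            apply hnd x
            intro y
            have hy : σ y ∈ H := K.le_topologicalClosure ⟨y, rfl⟩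
            have h1 : chi x (σ y) = 1 := hall ⟨σ y, hy⟩
            rw [hchiσ, Circle.coe_eq_one, exp_two_pi_mul_eq_one_iff] at h1
            exact h1
          obtain ⟨h, hh⟩ := hex
          refine integral_char_eq_zero μ (fun h => chi x (ι h)) (fun a b => ?_) h hh
          show chi x (ι (a * b)) = _
          have hab : ι (a * b) = ι a * ι b := rfl
          rw [hab, chi_mul]
        rw [hL, hR]
    have hB : ∀ f ∈ chiSpan d, (∫ h, f (ι h) ∂μ) = ∫ z, f z ∂lam := by
      intro f hf
      induction hf using Submodule.span_induction with
      | mem g hg => obtain ⟨x, rfl⟩ := hg; exact hA x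
      | zero => simp
      | add g₁ g₂ hg₁ hg₂ h1 h2 =>
        simp only [ContinuousMap.add_apply]
        have i1 : Integrable (fun h : ↥H => g₁ (ι h)) μ := cmap_integrable μ (g₁.comp ι)
        have i2 : Integrable (fun h : ↥H => g₂ (ι h)) μ := cmap_integrable μ (g₂.comp ι)
        have i3 : Integrable (fun z => g₁ z) lam := cmap_integrable lam g₁
        have i4 : Integrable (fun z => g₂ z) lam := cmap_integrable lam g₂
        rw [integral_add i1 i2, integral_add i3 i4, h1, h2]
      | smul c g hg h1 =>
        simp only [ContinuousMap.smul_apply]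
        rw [integral_smul, integral_smul, h1]
    have hC : IsClosed {f : C(Fin d → Circle, ℂ) | (∫ h, f (ι h) ∂μ) = ∫ z, f z ∂lam} := by
      apply isClosed_eq
      · exact continuous_integral_comp μ ι
      · exact continuous_integral_comp lam (ContinuousMap.id _)
    have hall : ∀ f : C(Fin d → Circle, ℂ), (∫ h, f (ι h) ∂μ) = ∫ z, f z ∂lam := by
      intro f
      have h1 : closure (chiSpan d : Set C(Fin d → Circle, ℂ)) ⊆
          {f : C(Fin d → Circle, ℂ) | (∫ h, f (ι h) ∂μ) = ∫ z, f z ∂lam} :=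
        closure_minimal (fun g hg => hB g hg) hC
      exact h1 (by rw [(dense_chiSpan d).closure_eq]; trivial)
    obtain ⟨f, hf0, hf1, hf01⟩ := exists_continuous_zero_one_of_isClosed hHclosed
      isClosed_singleton (Set.disjoint_singleton_right.mpr hwH)
    let F : C(Fin d → Circle, ℂ) := ⟨fun z => ((f z : ℝ) : ℂ),
      Complex.continuous_ofReal.comp f.continuous⟩
    have hFL : (∫ h, F (ι h) ∂μ) = 0 := by
      have hFz : ∀ h : ↥H, F (ι h) = 0 := by
        intro h
        have := hf0 h.2
        simp only [F, ContinuousMap.coe_mk]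
        rw [show f (ι h) = 0 from this]
        simp
      simp only [hFz]
      simp
    have hfint : ∫ z, (f z : ℝ) ∂lam = 0 := by
      have h1 := hall F
      rw [hFL] at h1
      have h2 : (∫ z, F z ∂lam) = ((∫ z, f z ∂lam : ℝ) : ℂ) := integral_ofReal
      rw [h2] at h1
      exact_mod_cast h1.symm
    have hnonneg : (0 : (Fin d → Circle) → ℝ) ≤ fun z => f z := fun z => (hf01 z).1
    have hfe : (fun z => f z) =ᵐ[lam] 0 :=
      (integral_eq_zero_iff_of_nonneg hnonneg (cmap_integrable lam f)).mp hfint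
    have hU : IsOpen {z : Fin d → Circle | 0 < f z} := isOpen_lt continuous_const f.continuous
    have hwU : w ∈ {z : Fin d → Circle | 0 < f z} := by
      have : f w = 1 := hf1 rfl
      simp [Set.mem_setOf_eq, this]
    haveI : lam.IsOpenPosMeasure := inferInstance
    have hpos : 0 < lam {z : Fin d → Circle | 0 < f z} := hU.measure_pos lam ⟨w, hwU⟩
    have hnull : lam {z : Fin d → Circle | 0 < f z} = 0 := by
      have h0 := MeasureTheory.ae_iff.mp hfe
      apply measure_mono_null _ h0
      intro z hz
      simp only [Set.mem_setOf_eq] at hz ⊢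
      exact fun h => hz.ne' (by simpa using h)
    exact absurd hnull hpos.ne'
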